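/- Let p > 2 be a prime not dividing n, X = (Z/p)^n with dual Y ≅ (Z/p)^n, and e_1,…,e_n the standard basis of Y. For each i define μ_i on X by density ρ_i(x) = 1 + Re (x, e_i) with respect to the uniform distribution m_X. Then μ_i is a probability distribution, its characteristic function satisfies μ̂_i(0) = 1, μ̂_i(±e_i) = 1/2, and μ̂_i(y) = 0 for all other y ∈ Y, and μ_i is not an idempotent distribution. -/

import Mathlib

/-- A probability distribution on a finite set, given by its mass function. -/
def IsDist {X : Type*} [Fintype X] (μ : X → ℝ) : Prop :=
  (∀ x, 0 ≤ μ x) ∧ ∑ x, μ x = 1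

/-- The characteristic function `μ̂(y) = ∑_x (x,y) μ({x})` of a distribution `μ`
on a finite abelian group `X`, where `y` is a character of `X`. -/
noncomputable def charFun {X : Type*} [AddCommGroup X] [Fintype X]
    (μ : X → ℝ) (y : AddChar X ℂ) : ℂ :=
  ∑ x, (μ x : ℂ) * y x

/-- The Haar (uniform) distribution `m_K` on a subgroup `K` of `X`. -/
noncomputable def haarDist {X : Type*} [AddCommGroup X] [Fintype X]
    (K : AddSubgroup X) : X → ℝ :=
  (K : Set X).indicator fun _ => ((Nat.card K : ℝ))⁻¹

/-- The degenerate distribution `E_{x₀}` concentrated at `x₀`. -/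
def diracDist {X : Type*} [DecidableEq X] (x₀ : X) : X → ℝ :=
  fun x => if x = x₀ then 1 else 0

/-- Convolution of two distributions on a finite abelian group. -/
noncomputable def convDist {X : Type*} [AddCommGroup X] [Fintype X]
    (μ ν : X → ℝ) : X → ℝ :=
  fun x => ∑ t, μ t * ν (x - t)

/-- `μ` is an idempotent distribution: a shift of the Haar distribution on a subgroup. -/
noncomputable def IsIdempotent {X : Type*} [AddCommGroup X] [Fintype X] [DecidableEq X]
    (μ : X → ℝ) : Prop :=
  ∃ (K : AddSubgroup X) (x₀ : X), μ = convDist (haarDist K) (diracDist x₀)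

/-- The linear forms `L_j = ∑_i A i j (ξ i)`, `j = 1,…,k`, of independent random
variables `ξ i` with distributions `μ i` are independent: the joint distribution of
`(L_1, …, L_k)` equals the product of the marginal distributions. -/
def FormsIndep {X : Type*} [AddCommGroup X] [Fintype X] [DecidableEq X] {n k : ℕ}
    (μ : Fin n → X → ℝ) (A : Fin n → Fin k → X → X) : Prop :=
  ∀ x : Fin k → X,
    (∑ t : Fin n → X, if (∀ j, ∑ i, A i j (t i) = x j) then ∏ i, μ i (t i) else 0) =
    ∏ j, ∑ t : Fin n → X, if (∑ i, A i j (t i) = x j) then ∏ i, μ i (t i) else 0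

/-- The adjoint `α̃` of an endomorphism `α` of `X`, acting on the character group:
`(α x, y) = (x, α̃ y)`. -/
noncomputable def adjChar {X : Type*} [AddCommGroup X] (α : X →+ X)
    (y : AddChar X ℂ) : AddChar X ℂ :=
  y.compAddMonoidHom α

private lemma psi_sum {M : Type*} [CommMonoid M] {A : Type*} [AddCommMonoid A]
    (ψ : AddChar A M) {ι : Type*} (s : Finset ι) (f : ι → A) :
    ψ (∑ j ∈ s, f j) = ∏ j ∈ s, ψ (f j) := by
  induction s using Finset.cons_induction with
  | empty => simp
  | cons a s ha ih => rw [Finset.sum_cons, Finset.prod_cons, AddChar.map_add_eq_mul, ih]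

/-- on `X = (ℤ/p)^n` (`p > 2` prime, `p ∤ n`), the distribution `μ_i`
with density `ρ_i(x) = 1 + Re (x, e_i)` with respect to `m_X` (where `(x, y)` is the
pairing `ζ ^ ∑ x_j y_j` for a primitive `p`-th root of unity `ζ`, and `e_i` the
standard basis of the dual) is a probability distribution, its characteristic function
is `1` at `0`, `1/2` at `±e_i` and `0` elsewhere, and `μ_i` is not idempotent. -/
theorem stmt15 (n p : ℕ) [Fact p.Prime] (hp2 : 2 < p) (hpn : ¬ p ∣ n)
    (ζ : ℂ) (hζ : IsPrimitiveRoot ζ p)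
    (μ : Fin n → (Fin n → ZMod p) → ℝ)
    (hμ : ∀ i x, μ i x =
      (1 + (ζ ^ (x i).val).re) * ((Fintype.card (Fin n → ZMod p) : ℝ))⁻¹) :
    (∀ i, IsDist (μ i)) ∧
    (∀ (i : Fin n) (c : Fin n → ZMod p),
      (∑ x : Fin n → ZMod p, (μ i x : ℂ) * ζ ^ (∑ j, x j * c j).val) =
        if c = 0 then 1
        else if c = Pi.single i 1 ∨ c = -Pi.single i 1 then 1 / 2
        else 0) ∧
    (∀ i, ¬ IsIdempotent (μ i)) := by
    classical
  have hp : p.Prime := Fact.out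
  have hp1 : 1 < p := hp.one_lt
  haveI : NeZero p := ⟨hp.ne_zero⟩
  haveI : Fact (1 < p) := ⟨hp1⟩
  have hζp : ζ ^ p = 1 := hζ.pow_eq_one
  have habs : ‖ζ‖ = 1 := by
    exact Complex.norm_eq_one_of_pow_eq_one hζp hp.ne_zero
  have hζne1 : ζ ≠ 1 := hζ.ne_one hp1
  have hζnen1 : ζ ≠ -1 := by
    intro h
    have h2 := hζ.pow_ne_one_of_pos_of_lt (l := 2) (by norm_num) hp2
    rw [h] at h2; norm_num at h2
  have hnsq : ζ.re * ζ.re + ζ.im * ζ.im = 1 := by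
    have := Complex.sq_norm ζ
    rw [habs, Complex.normSq_apply] at this
    nlinarith [this]
  have hrele : ∀ v : ℕ, |(ζ ^ v).re| ≤ 1 := by
    intro v
    calc |(ζ ^ v).re| ≤ ‖ζ ^ v‖ := Complex.abs_re_le_norm _
      _ = 1 := by rw [norm_pow, habs, one_pow]
  have hre1 : |ζ.re| ≤ 1 := by have := hrele 1; rwa [pow_one] at this
  have hre_lt : ζ.re < 1 := by
    rcases lt_or_ge ζ.re 1 with h | h
    · exact h
    · exfalso; apply hζne1
      have hre : ζ.re = 1 := le_antisymm (abs_le.mp hre1).2 h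
      have him : ζ.im = 0 := by nlinarith
      apply Complex.ext <;> simp [hre, him]
  have hre_gt : (-1 : ℝ) < ζ.re := by
    rcases lt_or_ge (-1 : ℝ) ζ.re with h | h
    · exact h
    · exfalso; apply hζnen1
      have hre : ζ.re = -1 := le_antisymm h (by linarith [(abs_le.mp hre1).1])
      have him : ζ.im = 0 := by nlinarith
      apply Complex.ext <;> simp [hre, him]
  -- the additive character
  set ψ : AddChar (ZMod p) ℂ := AddChar.zmodChar p hζp with hψdef
  have hψa : ∀ a : ZMod p, ψ a = ζ ^ a.val := fun a => AddChar.zmodChar_apply hζp a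
  have hprim : ψ.IsPrimitive := AddChar.zmodChar_primitive_of_primitive_root p hζ
  have hS : ∀ b : ZMod p, (∑ a : ZMod p, ψ (a * b)) = if b = 0 then ((p : ℂ)) else 0 := by
    intro b
    rw [AddChar.sum_mulShift b hprim]
    simp [ZMod.card]
  have hF : ∀ c : Fin n → ZMod p,
      (∑ x : Fin n → ZMod p, ∏ j, ψ (x j * c j)) = if c = 0 then ((p : ℂ)) ^ n else 0 := by
    intro c
    rw [← Fintype.prod_sum (f := fun j a => ψ (a * c j))]
    simp_rw [hS]
    by_cases hc : c = 0
    · simp [hc]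
    · rw [if_neg hc]
      obtain ⟨j, hj⟩ := Function.ne_iff.mp hc
      have hj' : c j ≠ 0 := by simpa using hj
      exact Finset.prod_eq_zero (Finset.mem_univ j) (by rw [if_neg hj'])
  have hpair : ∀ (x c : Fin n → ZMod p),
      (ζ ^ (∑ j, x j * c j).val : ℂ) = ∏ j, ψ (x j * c j) := by
    intro x c
    rw [← hψa, psi_sum]
  have hre_to_psi : ∀ a : ZMod p, ((ζ ^ a.val).re : ℂ) = (ψ a + ψ (-a)) / 2 := by
    intro a
    rw [AddChar.map_neg_eq_inv, hψa,
      Complex.inv_eq_conj (by rw [norm_pow, habs, one_pow]),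
      Complex.add_conj]
    push_cast
    ring
  have hNcard : ((Fintype.card (Fin n → ZMod p) : ℂ)) = (p : ℂ) ^ n := by
    rw [Fintype.card_fun]
    simp [ZMod.card]
  have hpn0 : ((p : ℂ)) ^ n ≠ 0 :=
    pow_ne_zero _ (Nat.cast_ne_zero.mpr hp.ne_zero)
  have hplus : ∀ (i : Fin n) (c x : Fin n → ZMod p),
      (∏ j, ψ (x j * ((c + Pi.single i 1 : Fin n → ZMod p) j))) = ψ (x i) * ∏ j, ψ (x j * c j) := by
    intro i c x
    have key : ∀ j, ψ (x j * ((c + Pi.single i 1 : Fin n → ZMod p) j))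
        = ψ (x j * c j) * (if j = i then ψ (x j) else 1) := by
      intro j
      by_cases hj : j = i
      · subst hj
        rw [if_pos rfl, Pi.add_apply, Pi.single_eq_same,
          show x j * (c j + 1) = x j * c j + x j by ring, AddChar.map_add_eq_mul]
      · rw [if_neg hj, Pi.add_apply, Pi.single_eq_of_ne hj, add_zero, mul_one]
    simp_rw [key]
    rw [Finset.prod_mul_distrib, Finset.prod_ite_eq' Finset.univ i (fun j => ψ (x j))]
    simp [mul_comm]
  have hminus : ∀ (i : Fin n) (c x : Fin n → ZMod p),
      (∏ j, ψ (x j * ((c - Pi.single i 1 : Fin n → ZMod p) j))) = ψ (-(x i)) * ∏ j, ψ (x j * c j) := by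
    intro i c x
    have key : ∀ j, ψ (x j * ((c - Pi.single i 1 : Fin n → ZMod p) j))
        = ψ (x j * c j) * (if j = i then ψ (-(x j)) else 1) := by
      intro j
      by_cases hj : j = i
      · subst hj
        rw [if_pos rfl, Pi.sub_apply, Pi.single_eq_same,
          show x j * (c j - 1) = x j * c j + -(x j) by ring, AddChar.map_add_eq_mul]
      · rw [if_neg hj, Pi.sub_apply, Pi.single_eq_of_ne hj, sub_zero, mul_one]
    simp_rw [key]
    rw [Finset.prod_mul_distrib, Finset.prod_ite_eq' Finset.univ i (fun j => ψ (-(x j)))]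
    simp [mul_comm]
  have hone : (1 : ZMod p) ≠ 0 := one_ne_zero
  have he0 : ∀ i : Fin n, (Pi.single i 1 : Fin n → ZMod p) ≠ 0 := by
    intro i h
    have := congrFun h i
    rw [Pi.single_eq_same] at this
    exact hone this
  have h2ne : (1 + 1 : ZMod p) ≠ 0 := by
    have : ((2 : ℕ) : ZMod p) ≠ 0 := by
      rw [Ne, ZMod.natCast_eq_zero_iff]
      intro hd
      have := Nat.le_of_dvd (by norm_num) hd
      omega
    simpa [one_add_one_eq_two] using this
  -- Part 2
  have h2 : ∀ (i : Fin n) (c : Fin n → ZMod p),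
      (∑ x : Fin n → ZMod p, (μ i x : ℂ) * ζ ^ (∑ j, x j * c j).val) =
        if c = 0 then 1
        else if c = Pi.single i 1 ∨ c = -Pi.single i 1 then 1 / 2
        else 0 := by
    intro i c
    have hterm : ∀ x : Fin n → ZMod p, (μ i x : ℂ) * ζ ^ (∑ j, x j * c j).val
        = ((p : ℂ) ^ n)⁻¹ * ((∏ j, ψ (x j * c j))
            + ((∏ j, ψ (x j * ((c + Pi.single i 1 : Fin n → ZMod p) j)))
              + (∏ j, ψ (x j * ((c - Pi.single i 1 : Fin n → ZMod p) j)))) / 2) := by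
      intro x
      rw [hμ, hpair, hplus, hminus]
      push_cast
      rw [hre_to_psi (x i), hNcard]
      ring
    have hcalc : (∑ x : Fin n → ZMod p, (μ i x : ℂ) * ζ ^ (∑ j, x j * c j).val)
        = ((p : ℂ) ^ n)⁻¹ * ((if c = 0 then (p : ℂ) ^ n else 0)
            + ((if c + Pi.single i 1 = 0 then (p : ℂ) ^ n else 0)
              + (if c - Pi.single i 1 = 0 then (p : ℂ) ^ n else 0)) / 2) := by
      simp_rw [hterm]
      rw [← Finset.mul_sum]
      congr 1
      rw [Finset.sum_add_distrib, ← Finset.sum_div, Finset.sum_add_distrib, hF, hF, hF]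
    rw [hcalc]
    by_cases hc0 : c = 0
    · subst hc0
      rw [if_pos rfl, if_pos rfl, if_neg (by simpa using he0 i),
        if_neg (by simpa using he0 i)]
      field_simp; ring
    · rw [if_neg hc0]
      by_cases hce : c = Pi.single i 1
      · subst hce
        rw [if_pos (Or.inl rfl), if_neg hc0, if_neg, if_pos (by abel)]
        · field_simp; ring
        · intro h
          have := congrFun h i
          simp only [Pi.add_apply, Pi.single_eq_same, Pi.zero_apply] at this
          exact h2ne this
      · by_cases hcne : c = -Pi.single i 1
        · subst hcne
          rw [if_pos (Or.inr rfl), if_neg hc0, if_pos (by abel), if_neg]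
          · field_simp; ring
          · intro h
            have := congrFun h i
            simp only [Pi.sub_apply, Pi.neg_apply, Pi.single_eq_same, Pi.zero_apply] at this
            apply h2ne
            linear_combination -this
        · rw [if_neg (not_or.mpr ⟨hce, hcne⟩), if_neg hc0, if_neg, if_neg]
          · simp
          · intro h; exact hce (sub_eq_zero.mp h)
          · intro h; exact hcne (eq_neg_of_add_eq_zero_left h)
  refine ⟨?_, h2, ?_⟩
  · intro i
    constructor
    · intro x
      rw [hμ]
      have h := (abs_le.mp (hrele (x i).val)).1
      have hNpos : (0 : ℝ) < (Fintype.card (Fin n → ZMod p) : ℝ) := by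
        exact_mod_cast Fintype.card_pos
      exact mul_nonneg (by linarith) (inv_nonneg.mpr hNpos.le)
    · have h := h2 i 0
      rw [if_pos rfl] at h
      have h' : (∑ x : Fin n → ZMod p, (μ i x : ℂ)) = 1 := by
        rw [← h]
        refine Finset.sum_congr rfl fun x _ => ?_
        simp
      have h'' : ((∑ x, μ i x : ℝ) : ℂ) = ((1 : ℝ) : ℂ) := by push_cast; simpa using h'
      exact_mod_cast h''
  · rintro i ⟨K, x₀, hK⟩
    have hconv : ∀ x : Fin n → ZMod p,
        convDist (haarDist K) (diracDist x₀) x = haarDist K (x - x₀) := by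
      intro x
      unfold convDist diracDist
      rw [Finset.sum_eq_single (x - x₀)]
      · rw [if_pos (by abel), mul_one]
      · intro t _ ht
        rw [if_neg, mul_zero]
        intro h
        exact ht (by rw [← h]; abel)
      · intro h; exact absurd (Finset.mem_univ _) h
    have hval : ∀ z, haarDist K z = 0 ∨ haarDist K z = ((Nat.card K : ℝ))⁻¹ := by
      intro z
      unfold haarDist
      by_cases hz : z ∈ (K : Set (Fin n → ZMod p))
      · right; rw [Set.indicator_of_mem hz]
      · left; rw [Set.indicator_of_notMem hz]
    have hNpos : (0 : ℝ) < ((Fintype.card (Fin n → ZMod p) : ℝ))⁻¹ := by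
      have : (0 : ℝ) < (Fintype.card (Fin n → ZMod p) : ℝ) := by
        exact_mod_cast Fintype.card_pos
      exact inv_pos.mpr this
    have hμ0 : μ i 0 = 2 * ((Fintype.card (Fin n → ZMod p) : ℝ))⁻¹ := by
      rw [hμ]
      norm_num [ZMod.val_zero]
    have hμe : μ i (Pi.single i 1)
        = (1 + ζ.re) * ((Fintype.card (Fin n → ZMod p) : ℝ))⁻¹ := by
      rw [hμ, Pi.single_eq_same, ZMod.val_one, pow_one]
    have hpos0 : 0 < μ i 0 := by rw [hμ0]; linarith
    have hpose : 0 < μ i (Pi.single i 1) := by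
      rw [hμe]; exact mul_pos (by linarith) hNpos
    have hne : μ i 0 ≠ μ i (Pi.single i 1) := by
      rw [hμ0, hμe]
      intro h
      have := mul_right_cancel₀ (ne_of_gt hNpos) h
      linarith
    rw [hK] at hpos0 hpose hne
    rw [hconv] at hpos0 hpose
    rw [hconv, hconv] at hne
    apply hne
    rcases hval (0 - x₀) with h0 | h0
    · rw [h0] at hpos0; exact absurd hpos0 (lt_irrefl 0)
    rcases hval (Pi.single i 1 - x₀) with h1 | h1
    · rw [h1] at hpose; exact absurd hpose (lt_irrefl 0)
    exact h0.trans h1.symm
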